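/- For a finite poset (X,≤), if (X,≤) has order dimension at least 3 then the transitive incompatibility graph tig(X,≤) contains an odd cycle. -/

import Mathlib

/-- The set of ordered incomparable pairs of the poset. -/
def IncPairs (X : Type*) [PartialOrder X] : Set (X × X) :=
  {p | ¬ p.1 ≤ p.2 ∧ ¬ p.2 ≤ p.1}

/-- Adjacency in tig(X,≤): (a,b) ~ (c,d) iff d ≤ a and b ≤ c. -/
def Incomp {X : Type*} [PartialOrder X] (p q : X × X) : Prop :=
  q.2 ≤ p.1 ∧ p.2 ≤ q.1

namespace Stmt18

variable {X : Type*}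

def Inc (r : X → X → Prop) (p : X × X) : Prop := ¬ r p.1 p.2 ∧ ¬ r p.2 p.1

def GStep (r : X → X → Prop) (p q : X × X) : Prop :=
  Inc r p ∧ Inc r q ∧
    ((p.1 = q.1 ∧ (r p.2 q.2 ∨ r q.2 p.2)) ∨ (p.2 = q.2 ∧ (r p.1 q.1 ∨ r q.1 p.1)))

def Conn (r : X → X → Prop) : X × X → X × X → Prop := Relation.ReflTransGen (GStep r)

def Star (r : X → X → Prop) : Prop := ∀ p, Inc r p → ¬ Conn r p p.swap

lemma Inc.swap {r : X → X → Prop} {p : X × X} (h : Inc r p) : Inc r p.swap := ⟨h.2, h.1⟩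

lemma gstep_symm {r : X → X → Prop} : Symmetric (GStep r) := by
  rintro p q ⟨hp, hq, h | h⟩
  · exact ⟨hq, hp, Or.inl ⟨h.1.symm, h.2.symm⟩⟩
  · exact ⟨hq, hp, Or.inr ⟨h.1.symm, h.2.symm⟩⟩

lemma conn_symm {r : X → X → Prop} {p q : X × X} (h : Conn r p q) : Conn r q p :=
  (@Relation.ReflTransGen.stdSymm _ _ ⟨fun _ _ h' => gstep_symm h'⟩).symm _ _ h

lemma gstep_swap {r : X → X → Prop} {p q : X × X} (h : GStep r p q) : GStep r p.swap q.swap := by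
  obtain ⟨hp, hq, h | h⟩ := h
  · exact ⟨hp.swap, hq.swap, Or.inr ⟨h.1, h.2⟩⟩
  · exact ⟨hp.swap, hq.swap, Or.inl ⟨h.1, h.2⟩⟩

lemma conn_swap {r : X → X → Prop} {p q : X × X} (h : Conn r p q) : Conn r p.swap q.swap := by
  induction h with
  | refl => exact Relation.ReflTransGen.refl
  | tail _ h2 ih => exact ih.tail (gstep_swap h2)

lemma conn_inc {r : X → X → Prop} {p q : X × X} (h : Conn r p q) (hp : Inc r p) : Inc r q := by
  induction h with
  | refl => exact hp
  | tail _ h2 _ => exact h2.2.1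

/-- The Triangle Lemma (Gallai/Golumbic, specialised): the apex `a` of a triangle
propagates along the implication class of the base edge `(b,c)`. -/
lemma triangle {r : X → X → Prop} {a b c : X}
    (hab : Inc r (a,b)) (hac : Inc r (a,c))
    (h2 : ¬ Conn r (b,c) (b,a)) (h3 : ¬ Conn r (b,c) (a,c)) :
    ∀ {e : X × X}, Conn r (b,c) e →
      Inc r (a, e.1) ∧ Inc r (a, e.2) ∧ Conn r (a, e.1) (a,b) ∧ Conn r (a, e.2) (a,c) := by
  intro e he
  induction he with
  | refl => exact ⟨hab, hac, Relation.ReflTransGen.refl, Relation.ReflTransGen.refl⟩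
  | @tail m e' hwalk hstep ih =>
    obtain ⟨hIy, hIz, hCy, hCz⟩ := ih
    obtain ⟨hm, he', hcase⟩ := hstep
    obtain ⟨y, z⟩ := m
    obtain ⟨y', z'⟩ := e'
    rcases hcase with ⟨hfst, hcmp⟩ | ⟨hsnd, hcmp⟩
    · -- second coordinate changes : e' = (y, z') with z,z' comparable
      simp only at hfst hcmp
      subst hfst
      by_cases haz : a = z'
      · -- e' = (y, a); contradiction with h2
        exfalso
        subst haz
        have hW : Conn r (b,c) (y,a) := hwalk.tail ⟨hm, he', Or.inl ⟨rfl, hcmp⟩⟩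
        have : Conn r (c,b) (a,y) := by
          have := conn_swap hW; simpa using this
        have : Conn r (c,b) (a,b) := this.trans hCy
        have := conn_swap this
        simp only [Prod.swap_prod_mk] at this
        exact h2 this
      · by_cases hcmp2 : r a z' ∨ r z' a
        · -- (y,z') connects to (y,a); contradiction with h2
          exfalso
          have hW : Conn r (b,c) (y,z') := hwalk.tail ⟨hm, he', Or.inl ⟨rfl, hcmp⟩⟩
          have hya : Inc r (y, a) := hIy.swap
          have hW2 : Conn r (b,c) (y,a) := hW.tail ⟨he', hya, Or.inl ⟨rfl, hcmp2.symm⟩⟩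
          have : Conn r (c,b) (a,y) := by
            have := conn_swap hW2; simpa using this
          have : Conn r (c,b) (a,b) := this.trans hCy
          have := conn_swap this
          simp only [Prod.swap_prod_mk] at this
          exact h2 this
        · push_neg at hcmp2
          have hIz' : Inc r (a, z') := ⟨hcmp2.1, hcmp2.2⟩
          have : GStep r (a, z) (a, z') := ⟨hIz, hIz', Or.inl ⟨rfl, hcmp⟩⟩
          exact ⟨hIy, hIz', hCy, (Relation.ReflTransGen.single (gstep_symm this)).trans hCz⟩
    · -- first coordinate changes : e' = (y', z) with y,y' comparable
      simp only at hsnd hcmp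
      subst hsnd
      by_cases hay : a = y'
      · exfalso
        subst hay
        have hW : Conn r (b,c) (a,z) := hwalk.tail ⟨hm, he', Or.inr ⟨rfl, hcmp⟩⟩
        exact h3 (hW.trans hCz)
      · by_cases hcmp2 : r a y' ∨ r y' a
        · exfalso
          have hW : Conn r (b,c) (y',z) := hwalk.tail ⟨hm, he', Or.inr ⟨rfl, hcmp⟩⟩
          have hW2 : Conn r (b,c) (a,z) := hW.tail ⟨he', hIz, Or.inr ⟨rfl, hcmp2.symm⟩⟩
          exact h3 (hW2.trans hCz)
        · push_neg at hcmp2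
          have hIy' : Inc r (a, y') := ⟨hcmp2.1, hcmp2.2⟩
          have : GStep r (a, y) (a, y') := ⟨hIy, hIy', Or.inl ⟨rfl, hcmp⟩⟩
          exact ⟨hIy', hIz, (Relation.ReflTransGen.single (gstep_symm this)).trans hCy, hCz⟩



/-- Class transitivity: if `(a,b)` and `(b,c)` are in the same implication class
then `(a,c)` is incomparable and in the same class. -/
lemma T1 {r : X → X → Prop} (hrefl : ∀ x, r x x) (hstar : Star r) {a b c : X}
    (h1 : Inc r (a,b)) (h2' : Inc r (b,c)) (hconn : Conn r (a,b) (b,c)) :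
    Inc r (a,c) ∧ Conn r (a,b) (a,c) := by
  have hac : Inc r (a,c) := by
    by_cases heq : a = c
    · exfalso
      subst heq
      exact hstar (a,b) h1 (by simpa using hconn)
    · by_cases hcmp : r a c ∨ r c a
      · exfalso
        have hst : GStep r (a,b) (c,b) := ⟨h1, h2'.swap, Or.inr ⟨rfl, hcmp⟩⟩
        have : Conn r (b,c) (c,b) := (conn_symm hconn).trans (Relation.ReflTransGen.single hst)
        exact hstar (b,c) h2' (by simpa using this)
      · push_neg at hcmp
        exact ⟨hcmp.1, hcmp.2⟩
  refine ⟨hac, ?_⟩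
  by_contra hD
  have hh2 : ¬ Conn r (b,c) (b,a) := by
    intro h
    have : Conn r (a,b) (b,a) := hconn.trans h
    exact hstar (a,b) h1 (by simpa using this)
  have hh3 : ¬ Conn r (b,c) (a,c) := fun h => hD (hconn.trans h)
  have := (triangle h1 hac hh2 hh3 (conn_symm hconn)).1
  exact this.1 (hrefl a)


/-- membership in the implication class of `p₀` -/
def Cls (r : X → X → Prop) (p₀ : X × X) (e : X × X) : Prop := Conn r e p₀

/-- incomparable pairs surviving after the class of `p₀` is added -/
def Ep (r : X → X → Prop) (p₀ : X × X) (e : X × X) : Prop :=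
  Inc r e ∧ ¬ Cls r p₀ e ∧ ¬ Cls r p₀ e.swap

/-- the order extended by one implication class -/
def Ext (r : X → X → Prop) (p₀ : X × X) : X → X → Prop :=
  fun x y => r x y ∨ Cls r p₀ (x, y)

lemma Ep.swap {r : X → X → Prop} {p₀ e : X × X} (h : Ep r p₀ e) : Ep r p₀ e.swap :=
  ⟨h.1.swap, h.2.2, by simpa using h.2.1⟩

lemma cls_inc {r : X → X → Prop} {p₀ e : X × X} (hp₀ : Inc r p₀) (h : Cls r p₀ e) :
    Inc r e := conn_inc (conn_symm h) hp₀

lemma inc_ext {r : X → X → Prop} {p₀ : X × X} {e : X × X} :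
    Inc (Ext r p₀) e ↔ Ep r p₀ e := by
  constructor
  · rintro ⟨h1, h2⟩
    rw [Ext] at h1 h2
    push_neg at h1 h2
    exact ⟨⟨h1.1, h2.1⟩, by simpa using h1.2, h2.2⟩
  · rintro ⟨h1, h2, h3⟩
    constructor
    · rintro (h | h)
      · exact h1.1 h
      · exact h2 (by simpa using h)
    · rintro (h | h)
      · exact h1.2 h
      · exact h3 h

lemma ext_refl {r : X → X → Prop} (hrefl : ∀ x, r x x) {p₀ : X × X} (x : X) :
    Ext r p₀ x x := Or.inl (hrefl x)

lemma ext_trans {r : X → X → Prop} (hrefl : ∀ x, r x x) (htrans : Transitive r)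
    (hstar : Star r) {p₀ : X × X} (hp₀ : Inc r p₀) : Transitive (Ext r p₀) := by
  rintro x y z (hxy | hxy) (hyz | hyz)
  · exact Or.inl (htrans hxy hyz)
  · -- r x y, Cls (y,z)
    have hyzI : Inc r (y, z) := cls_inc hp₀ hyz
    by_cases hxz : r x z
    · exact Or.inl hxz
    by_cases hzx : r z x
    · exact absurd (htrans hzx hxy) hyzI.2
    by_cases hxy' : x = y
    · exact Or.inr (hxy' ▸ hyz)
    have hIxz : Inc r (x, z) := ⟨hxz, hzx⟩
    have : GStep r (y,z) (x,z) := ⟨hyzI, hIxz, Or.inr ⟨rfl, Or.inr hxy⟩⟩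
    exact Or.inr ((Relation.ReflTransGen.single (gstep_symm this)).trans hyz)
  · -- Cls (x,y), r y z
    have hxyI : Inc r (x, y) := cls_inc hp₀ hxy
    by_cases hxz : r x z
    · exact Or.inl hxz
    by_cases hzx : r z x
    · exact absurd (htrans hyz hzx) hxyI.2
    by_cases hyz' : y = z
    · exact Or.inr (hyz' ▸ hxy)
    have hIxz : Inc r (x, z) := ⟨hxz, hzx⟩
    have : GStep r (x,y) (x,z) := ⟨hxyI, hIxz, Or.inl ⟨rfl, Or.inl hyz⟩⟩
    exact Or.inr ((Relation.ReflTransGen.single (gstep_symm this)).trans hxy)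
  · -- Cls (x,y), Cls (y,z)
    have hxyI : Inc r (x, y) := cls_inc hp₀ hxy
    have hyzI : Inc r (y, z) := cls_inc hp₀ hyz
    have hconn : Conn r (x,y) (y,z) := hxy.trans (conn_symm hyz)
    obtain ⟨hI, hC⟩ := T1 hrefl hstar hxyI hyzI hconn
    exact Or.inr ((conn_symm hC).trans hxy)

lemma ext_anti {r : X → X → Prop} (hanti : ∀ {x y}, r x y → r y x → x = y)
    (hstar : Star r) {p₀ : X × X} (hp₀ : Inc r p₀) :
    ∀ {x y}, Ext r p₀ x y → Ext r p₀ y x → x = y := by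
  rintro x y (hxy | hxy) (hyx | hyx)
  · exact hanti hxy hyx
  · exact absurd hxy (cls_inc hp₀ hyx).2
  · exact absurd hyx (cls_inc hp₀ hxy).2
  · exfalso
    have hI : Inc r (x,y) := cls_inc hp₀ hxy
    exact hstar (x,y) hI (hxy.trans (conn_symm (show Conn r (y,x) p₀ from hyx)))

/-- apex data: `x` is incomparable to both ends of `p₀ = (s,t)`, the connecting
edges are outside the class of `p₀`, and the two edges lie in distinct classes. -/
def ANx (r : X → X → Prop) (s t x : X) : Prop :=
  Ep r (s,t) (x,s) ∧ Ep r (s,t) (x,t) ∧ ¬ Conn r (x,s) (x,t)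

/-- `e` lies in one of the two classes attached to the apex `x`. -/
def Sid (r : X → X → Prop) (s t : X) (e : X × X) (x : X) : Prop :=
  Conn r e (x,s) ∨ Conn r e (x,t)

lemma apex_rigid {r : X → X → Prop} {s t : X} (hp₀ : Inc r (s,t)) {x : X}
    (hx : ANx r s t x) {u v : X} (h : Conn r (x,s) (u,v)) :
    Inc r (t,u) ∧ Inc r (t,v) ∧ Conn r (t,u) (t,x) ∧ Conn r (t,v) (t,s) := by
  have h3 : ¬ Conn r (x,s) (t,s) := by
    intro h'
    have : Conn r (s,x) (s,t) := by simpa using conn_swap h'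
    exact hx.1.2.2 this
  have := triangle (r := r) (a := t) (b := x) (c := s) hx.2.1.1.swap hp₀.swap hx.2.2 h3 h
  simpa using this

lemma apex_rigid' {r : X → X → Prop} {s t : X} (hp₀ : Inc r (s,t)) {x : X}
    (hx : ANx r s t x) {u v : X} (h : Conn r (x,t) (u,v)) :
    Inc r (s,u) ∧ Inc r (s,v) ∧ Conn r (s,u) (s,x) ∧ Conn r (s,v) (s,t) := by
  have h2 : ¬ Conn r (x,t) (x,s) := fun h' => hx.2.2 (conn_symm h')
  have h3 : ¬ Conn r (x,t) (s,t) := fun h' => hx.2.1.2.1 h'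
  have := triangle (r := r) (a := s) (b := x) (c := t) hx.1.1.swap hp₀ h2 h3 h
  simpa using this

lemma glue_ss {r : X → X → Prop} {s t : X} (hp₀ : Inc r (s,t)) {x x₂ : X}
    (hx : ANx r s t x) (h : Conn r (x,s) (x₂,s)) :
    ∀ f, Sid r s t f x₂ → Sid r s t f x := by
  have htt : Conn r (x₂,t) (x,t) := by
    have := (apex_rigid hp₀ hx h).2.2.1
    simpa using conn_swap this
  have hss : Conn r (x₂,s) (x,s) := conn_symm h
  rintro f (hf | hf)
  · exact Or.inl (hf.trans hss)
  · exact Or.inr (hf.trans htt)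

lemma glue_tt {r : X → X → Prop} {s t : X} (hp₀ : Inc r (s,t)) {x x₂ : X}
    (hx : ANx r s t x) (h : Conn r (x,t) (x₂,t)) :
    ∀ f, Sid r s t f x₂ → Sid r s t f x := by
  have hss : Conn r (x₂,s) (x,s) := by
    have := (apex_rigid' hp₀ hx h).2.2.1
    simpa using conn_swap this
  have htt : Conn r (x₂,t) (x,t) := conn_symm h
  rintro f (hf | hf)
  · exact Or.inl (hf.trans hss)
  · exact Or.inr (hf.trans htt)

lemma glue_st {r : X → X → Prop} (hrefl : ∀ x, r x x) {s t : X} (hp₀ : Inc r (s,t)) {x x₂ : X}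
    (hx : ANx r s t x) (h : Conn r (x,s) (x₂,t)) : False :=
  (apex_rigid hp₀ hx h).2.1.1 (hrefl t)

lemma glue_ts {r : X → X → Prop} (hrefl : ∀ x, r x x) {s t : X} (hp₀ : Inc r (s,t)) {x x₂ : X}
    (hx : ANx r s t x) (h : Conn r (x,t) (x₂,s)) : False :=
  (apex_rigid' hp₀ hx h).2.1.1 (hrefl s)

lemma glue_si {r : X → X → Prop} {s t : X} (hp₀ : Inc r (s,t)) {x x₂ : X}
    (hx : ANx r s t x) (h : Conn r (x,s) (s,x₂)) : False := by
  have := (apex_rigid hp₀ hx h).2.2.1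
  -- Conn r (t,s) (t,x)
  have : Conn r (x,t) (s,t) := by
    have := conn_swap this
    simpa using conn_symm this
  exact hx.2.1.2.1 this

lemma glue_sti {r : X → X → Prop} (hrefl : ∀ x, r x x) {s t : X} (hp₀ : Inc r (s,t)) {x x₂ : X}
    (hx : ANx r s t x) (h : Conn r (x,s) (t,x₂)) : False :=
  (apex_rigid hp₀ hx h).1.1 (hrefl t)

lemma glue_tsi {r : X → X → Prop} (hrefl : ∀ x, r x x) {s t : X} (hp₀ : Inc r (s,t)) {x x₂ : X}
    (hx : ANx r s t x) (h : Conn r (x,t) (s,x₂)) : False :=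
  (apex_rigid' hp₀ hx h).1.1 (hrefl s)

lemma glue_tti {r : X → X → Prop} {s t : X} (hp₀ : Inc r (s,t)) {x x₂ : X}
    (hx : ANx r s t x) (h : Conn r (x,t) (t,x₂)) : False := by
  have := (apex_rigid' hp₀ hx h).2.2.1
  -- Conn r (s,t) (s,x)
  have : Conn r (s,x) (s,t) := conn_symm this
  exact hx.1.2.2 this

/-- the wedge (new-step) lemma: a `Γ'`-step over a class chord makes its apex
adjacent to the base pair `(s,t)` with controlled classes. -/
lemma wedge {r : X → X → Prop} {s t : X} (hp₀ : Inc r (s,t)) {x y y' : X}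
    (hxy : Ep r (s,t) (x,y)) (hxy' : Ep r (s,t) (x,y')) (hB : Conn r (y,y') (s,t)) :
    Ep r (s,t) (x,s) ∧ Ep r (s,t) (x,t) ∧ Conn r (x,y) (x,s) ∧ Conn r (x,y') (x,t) := by
  have h2 : ¬ Conn r (y,y') (y,x) := fun h => hxy.2.2 ((conn_symm h).trans hB)
  have h3 : ¬ Conn r (y,y') (x,y') := fun h => hxy'.2.1 ((conn_symm h).trans hB)
  obtain ⟨hIs, hIt, C1, C2⟩ := triangle (r := r) (a := x) (b := y) (c := y') hxy.1 hxy'.1 h2 h3 hB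
  simp only at hIs hIt C1 C2
  have hEs : Ep r (s,t) (x,s) := by
    refine ⟨hIs, fun h => hxy.2.1 ((conn_symm C1).trans h), fun h => ?_⟩
    have h' : Conn r (x,s) (t,s) := by simpa using conn_swap h
    exact hxy.2.2 (by simpa [Cls] using conn_swap ((conn_symm C1).trans h'))
  have hEt : Ep r (s,t) (x,t) := by
    refine ⟨hIt, fun h => hxy'.2.1 ((conn_symm C2).trans h), fun h => ?_⟩
    have h' : Conn r (x,t) (t,s) := by simpa using conn_swap h
    exact hxy'.2.2 (by simpa [Cls] using conn_swap ((conn_symm C2).trans h'))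
  exact ⟨hEs, hEt, conn_symm C1, conn_symm C2⟩

/-- Key safety theorem: adding an implication class preserves the `Star` property. -/
lemma star_ext {r : X → X → Prop} (hrefl : ∀ x, r x x) (hstar : Star r)
    {s t : X} (hp₀ : Inc r (s,t)) : Star (Ext r (s,t)) := by
  intro q hq hconn
  have hqE : Ep r (s,t) q := inc_ext.mp hq
  -- the invariant along the walk
  set Inv : X × X → Prop := fun e =>
    Conn r e q ∨ (∃ x, ANx r s t x ∧ Sid r s t e x ∧ Sid r s t q x) ∨
      (∃ x, ANx r s t x ∧ Sid r s t e.swap x ∧ Sid r s t q.swap x) with hInv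
  have transfer : ∀ {e e'}, Conn r e e' → Inv e → Inv e' := by
    rintro e e' hC (h | ⟨x, hx, hS, hSq⟩ | ⟨x, hx, hS, hSq⟩)
    · exact Or.inl ((conn_symm hC).trans h)
    · refine Or.inr (Or.inl ⟨x, hx, ?_, hSq⟩)
      rcases hS with h' | h'
      · exact Or.inl ((conn_symm hC).trans h')
      · exact Or.inr ((conn_symm hC).trans h')
    · refine Or.inr (Or.inr ⟨x, hx, ?_, hSq⟩)
      rcases hS with h' | h'
      · exact Or.inl ((conn_symm (conn_swap hC)).trans h')
      · exact Or.inr ((conn_symm (conn_swap hC)).trans h')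
  -- update at a new step, unswapped family: apex x with `Conn m (x,a)`, `Conn e' (x,b)`,
  -- {a,b} = {s,t} (a is the side of m)
  have update : ∀ {m e' : X × X} {x : X},
      Ep r (s,t) (x,s) → Ep r (s,t) (x,t) →
      ((Conn r m (x,s) ∧ Conn r e' (x,t)) ∨ (Conn r m (x,t) ∧ Conn r e' (x,s))) →
      Inv m → Inv e' := by
    rintro m e' x hxs hxt hor hInvm
    by_cases hNT : Conn r (x,s) (x,t)
    · -- collapsed: m and e' are r-connected
      rcases hor with ⟨hA, hA'⟩ | ⟨hA, hA'⟩
      · exact transfer ((hA.trans hNT).trans (conn_symm hA')) hInvm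
      · exact transfer ((hA.trans (conn_symm hNT)).trans (conn_symm hA')) hInvm
    · have hx : ANx r s t x := ⟨hxs, hxt, hNT⟩
      have hSe' : Sid r s t e' x := by
        rcases hor with ⟨_, hA'⟩ | ⟨_, hA'⟩
        · exact Or.inr hA'
        · exact Or.inl hA'
      have hSm : Sid r s t m x := by
        rcases hor with ⟨hA, _⟩ | ⟨hA, _⟩
        · exact Or.inl hA
        · exact Or.inr hA
      rcases hInvm with h | ⟨x₂, hx₂, hS, hSq⟩ | ⟨x₂, hx₂, hS, hSq⟩
      · -- e was r-connected to q
        refine Or.inr (Or.inl ⟨x, hx, hSe', ?_⟩)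
        rcases hSm with h' | h'
        · exact Or.inl ((conn_symm h).trans h')
        · exact Or.inr ((conn_symm h).trans h')
      · -- same family: diagonal transfers, off-diagonal impossible
        refine Or.inr (Or.inl ⟨x, hx, hSe', ?_⟩)
        rcases hSm with hA | hA <;> rcases hS with hB | hB
        · exact glue_ss hp₀ hx ((conn_symm hA).trans hB) q hSq
        · exact absurd ((conn_symm hA).trans hB) (fun h => glue_st hrefl hp₀ hx h)
        · exact absurd ((conn_symm hA).trans hB) (fun h => glue_ts hrefl hp₀ hx h)
        · exact glue_tt hp₀ hx ((conn_symm hA).trans hB) q hSq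
      · -- cross family: impossible
        exfalso
        have hS' : Conn r m (s, x₂) ∨ Conn r m (t, x₂) := by
          rcases hS with h' | h'
          · exact Or.inl (by simpa using conn_swap h')
          · exact Or.inr (by simpa using conn_swap h')
        rcases hSm with hA | hA <;> rcases hS' with hB | hB
        · exact glue_si hp₀ hx ((conn_symm hA).trans hB)
        · exact glue_sti hrefl hp₀ hx ((conn_symm hA).trans hB)
        · exact glue_tsi hrefl hp₀ hx ((conn_symm hA).trans hB)
        · exact glue_tti hp₀ hx ((conn_symm hA).trans hB)
  -- update at a new step, swapped family
  have update' : ∀ {m e' : X × X} {x : X},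
      Ep r (s,t) (x,s) → Ep r (s,t) (x,t) →
      ((Conn r m.swap (x,s) ∧ Conn r e'.swap (x,t)) ∨
        (Conn r m.swap (x,t) ∧ Conn r e'.swap (x,s))) →
      Inv m → Inv e' := by
    rintro m e' x hxs hxt hor hInvm
    by_cases hNT : Conn r (x,s) (x,t)
    · rcases hor with ⟨hA, hA'⟩ | ⟨hA, hA'⟩
      · refine transfer ?_ hInvm
        have := (hA.trans hNT).trans (conn_symm hA')
        simpa using conn_swap this
      · refine transfer ?_ hInvm
        have := (hA.trans (conn_symm hNT)).trans (conn_symm hA')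
        simpa using conn_swap this
    · have hx : ANx r s t x := ⟨hxs, hxt, hNT⟩
      have hSe' : Sid r s t e'.swap x := by
        rcases hor with ⟨_, hA'⟩ | ⟨_, hA'⟩
        · exact Or.inr hA'
        · exact Or.inl hA'
      have hSm : Sid r s t m.swap x := by
        rcases hor with ⟨hA, _⟩ | ⟨hA, _⟩
        · exact Or.inl hA
        · exact Or.inr hA
      rcases hInvm with h | ⟨x₂, hx₂, hS, hSq⟩ | ⟨x₂, hx₂, hS, hSq⟩
      · refine Or.inr (Or.inr ⟨x, hx, hSe', ?_⟩)
        have h' : Conn r q.swap m.swap := conn_swap (conn_symm h)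
        rcases hSm with hA | hA
        · exact Or.inl (h'.trans hA)
        · exact Or.inr (h'.trans hA)
      · -- stored unswapped, new swapped: cross family, impossible
        exfalso
        have hS' : Conn r m.swap (s, x₂) ∨ Conn r m.swap (t, x₂) := by
          rcases hS with h' | h'
          · exact Or.inl (by simpa using conn_swap h')
          · exact Or.inr (by simpa using conn_swap h')
        rcases hSm with hA | hA <;> rcases hS' with hB | hB
        · exact glue_si hp₀ hx ((conn_symm hA).trans hB)
        · exact glue_sti hrefl hp₀ hx ((conn_symm hA).trans hB)
        · exact glue_tsi hrefl hp₀ hx ((conn_symm hA).trans hB)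
        · exact glue_tti hp₀ hx ((conn_symm hA).trans hB)
      · -- both swapped: same family
        refine Or.inr (Or.inr ⟨x, hx, hSe', ?_⟩)
        rcases hSm with hA | hA <;> rcases hS with hB | hB
        · exact glue_ss hp₀ hx ((conn_symm hA).trans hB) q.swap hSq
        · exact absurd ((conn_symm hA).trans hB) (fun h => glue_st hrefl hp₀ hx h)
        · exact absurd ((conn_symm hA).trans hB) (fun h => glue_ts hrefl hp₀ hx h)
        · exact glue_tt hp₀ hx ((conn_symm hA).trans hB) q.swap hSq
  -- prove the invariant along the walk
  have main : ∀ e, Relation.ReflTransGen (GStep (Ext r (s,t))) q e → Inv e := by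
    intro e he
    induction he with
    | refl => exact Or.inl Relation.ReflTransGen.refl
    | @tail m e' hwalk hstep ih =>
      obtain ⟨hm, he', hcase⟩ := hstep
      have hmE : Ep r (s,t) m := inc_ext.mp hm
      have he'E : Ep r (s,t) e' := inc_ext.mp he'
      obtain ⟨m1, m2⟩ := m
      obtain ⟨e1, e2⟩ := e'
      rcases hcase with ⟨h1, hcmp⟩ | ⟨h1, hcmp⟩
      · -- first coordinates equal
        simp only at h1 hcmp
        subst h1
        rcases hcmp with (h | hB) | (h | hB)
        · exact transfer (Relation.ReflTransGen.single ⟨hmE.1, he'E.1, Or.inl ⟨rfl, Or.inl h⟩⟩) ih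
        · obtain ⟨hxs, hxt, C1, C2⟩ := wedge hp₀ hmE he'E hB
          exact update hxs hxt (Or.inl ⟨C1, C2⟩) ih
        · exact transfer (Relation.ReflTransGen.single ⟨hmE.1, he'E.1, Or.inl ⟨rfl, Or.inr h⟩⟩) ih
        · obtain ⟨hxs, hxt, C1, C2⟩ := wedge hp₀ he'E hmE hB
          exact update hxs hxt (Or.inr ⟨C2, C1⟩) ih
      · -- second coordinates equal
        simp only at h1 hcmp
        subst h1
        rcases hcmp with (h | hB) | (h | hB)
        · exact transfer (Relation.ReflTransGen.single ⟨hmE.1, he'E.1, Or.inr ⟨rfl, Or.inl h⟩⟩) ih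
        · obtain ⟨hxs, hxt, C1, C2⟩ := wedge hp₀ hmE.swap he'E.swap hB
          exact update' (m := (m1,m2)) (e' := (e1,m2)) hxs hxt (Or.inl ⟨C1, C2⟩) ih
        · exact transfer (Relation.ReflTransGen.single ⟨hmE.1, he'E.1, Or.inr ⟨rfl, Or.inr h⟩⟩) ih
        · obtain ⟨hxs, hxt, C1, C2⟩ := wedge hp₀ he'E.swap hmE.swap hB
          exact update' (m := (m1,m2)) (e' := (e1,m2)) hxs hxt (Or.inr ⟨C2, C1⟩) ih
  -- conclude
  rcases main q.swap hconn with h | ⟨x, hx, hS1, hS2⟩ | ⟨x, hx, hS1, hS2⟩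
  · exact hstar q hqE.1 (conn_symm h)
  · rcases hS1 with hA | hA <;> rcases hS2 with hB | hB
    · exact hstar q hqE.1 (hB.trans (conn_symm hA))
    · exact glue_sti hrefl hp₀ hx ((conn_symm hA).trans (by simpa [Conn] using conn_swap hB))
    · exact glue_tsi hrefl hp₀ hx ((conn_symm hA).trans (by simpa [Conn] using conn_swap hB))
    · exact hstar q hqE.1 (hB.trans (conn_symm hA))
  · simp only [Prod.swap_swap] at hS1
    rcases hS2 with hA | hA <;> rcases hS1 with hB | hB
    · exact hstar q hqE.1 (hB.trans (conn_symm hA))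
    · exact glue_sti hrefl hp₀ hx ((conn_symm hA).trans (by simpa [Conn] using conn_swap hB))
    · exact glue_tsi hrefl hp₀ hx ((conn_symm hA).trans (by simpa [Conn] using conn_swap hB))
    · exact hstar q hqE.1 (hB.trans (conn_symm hA))

/-- Main construction: a poset whose implication-class graph satisfies `Star`
has a "conjugate" orientation of its incomparability pairs. -/
lemma conjugate [Fintype X] (n : ℕ) : ∀ (r : X → X → Prop), (∀ x, r x x) → Transitive r →
    (∀ {x y : X}, r x y → r y x → x = y) → Star r → Set.ncard {p : X × X | Inc r p} = n →
    ∃ S : X × X → Prop, (∀ p, S p → Inc r p) ∧ (∀ p, Inc r p → (S p ↔ ¬ S p.swap)) ∧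
      (∀ x y z : X, S (x,y) → S (y,z) → S (x,z)) ∧
      (∀ p q : X × X, S p → Conn r p q → S q) := by
  induction n using Nat.strong_induction_on with
  | _ n ih =>
    intro r hrefl htrans hanti hstar hcard
    by_cases hex : ∃ p : X × X, Inc r p
    · obtain ⟨⟨s, t⟩, hp₀⟩ := hex
      -- extend by the class of (s,t)
      have hrefl' : ∀ x, Ext r (s,t) x x := ext_refl hrefl
      have htrans' : Transitive (Ext r (s,t)) := ext_trans hrefl htrans hstar hp₀
      have hanti' : ∀ {x y : X}, Ext r (s,t) x y → Ext r (s,t) y x → x = y :=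
        fun h1 h2 => ext_anti (fun hxy hyx => hanti hxy hyx) hstar hp₀ h1 h2
      have hstar' : Star (Ext r (s,t)) := star_ext hrefl hstar hp₀
      have hsub : {p : X × X | Inc (Ext r (s,t)) p} ⊂ {p : X × X | Inc r p} := by
        constructor
        · intro p hp
          exact (inc_ext.mp hp).1
        · intro hcon
          have h1 : Inc r (s,t) := hp₀
          have h2 : ¬ Inc (Ext r (s,t)) (s,t) := by
            intro h
            exact (inc_ext.mp h).2.1 Relation.ReflTransGen.refl
          exact h2 (hcon h1)
      have hlt : Set.ncard {p : X × X | Inc (Ext r (s,t)) p} < n := by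
        rw [← hcard]
        exact Set.ncard_lt_ncard hsub (Set.toFinite _)
      obtain ⟨S', hS1', hS2', hS3', hS4'⟩ :=
        ih _ hlt (Ext r (s,t)) hrefl' htrans' hanti' hstar' rfl
      -- the combined orientation
      refine ⟨fun p => Cls r (s,t) p ∨ S' p, ?_, ?_, ?_, ?_⟩
      · rintro p (hp | hp)
        · exact cls_inc hp₀ hp
        · exact (inc_ext.mp (hS1' p hp)).1
      · -- transversality
        intro p hp
        by_cases hc1 : Cls r (s,t) p
        · have hns : ¬ Cls r (s,t) p.swap := fun hc2 =>
            hstar p (cls_inc hp₀ hc1) (hc1.trans (conn_symm hc2))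
          have hns' : ¬ S' p.swap := fun hs' => by
            have h := (inc_ext.mp (hS1' _ hs')).2.2
            simp only [Prod.swap_swap] at h
            exact h hc1
          constructor
          · rintro - (h | h)
            · exact hns h
            · exact hns' h
          · intro _
            exact Or.inl hc1
        · by_cases hc2 : Cls r (s,t) p.swap
          · have hnS' : ¬ S' p := fun hs' => (inc_ext.mp (hS1' _ hs')).2.2 hc2
            constructor
            · rintro (h | h) -
              · exact hc1 h
              · exact hnS' h
            · intro h
              exact absurd (Or.inl hc2) h
          · have hEp : Inc (Ext r (s,t)) p := inc_ext.mpr ⟨hp, hc1, hc2⟩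
            constructor
            · rintro (h | h) (h2 | h2)
              · exact hc1 h
              · exact hc1 h
              · exact hc2 h2
              · exact ((hS2' p hEp).mp h) h2
            · intro h
              exact Or.inr ((hS2' p hEp).mpr (fun hsw => h (Or.inr hsw)))
      · -- transitivity
        rintro x y z (hxy | hxy) (hyz | hyz)
        · -- both in the class
          have hconn : Conn r (x,y) (y,z) := hxy.trans (conn_symm hyz)
          obtain ⟨hI, hC⟩ := T1 hrefl hstar (cls_inc hp₀ hxy) (cls_inc hp₀ hyz) hconn
          exact Or.inl ((conn_symm hC).trans hxy)
        · -- Cls (x,y), S' (y,z)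
          have hyzE : Inc (Ext r (s,t)) (y,z) := hS1' _ hyz
          have hyzEp := inc_ext.mp hyzE
          by_cases hxz : x = z
          · exfalso
            exact hyzE.2 (Or.inr (hxz ▸ hxy))
          by_cases hrxz : r x z
          · exfalso
            have hIyx : Inc r (y,x) := (cls_inc hp₀ hxy).swap
            have : GStep r (y,x) (y,z) := ⟨hIyx, hyzEp.1, Or.inl ⟨rfl, Or.inl hrxz⟩⟩
            have h1 : Conn r (y,z) (t,s) := by
              have h2 : Conn r (y,x) (t,s) := by simpa using conn_swap hxy
              exact (conn_symm (Relation.ReflTransGen.single this)).trans h2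
            have : Conn r (z,y) (s,t) := by simpa using conn_swap h1
            exact hyzEp.2.2 this
          by_cases hrzx : r z x
          · exfalso
            have : Ext r (s,t) z y := htrans' (Or.inl hrzx) (Or.inr hxy)
            exact hyzE.2 this
          by_cases hczx : Cls r (s,t) (z,x)
          · exfalso
            have hconn : Conn r (z,x) (x,y) := hczx.trans (conn_symm hxy)
            obtain ⟨hI, hC⟩ := T1 hrefl hstar (cls_inc hp₀ hczx) (cls_inc hp₀ hxy) hconn
            have : Cls r (s,t) (z,y) := (conn_symm hC).trans hczx
            exact hyzE.2 (Or.inr this)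
          by_cases hcxz : Cls r (s,t) (x,z)
          · exact Or.inl hcxz
          · -- (x,z) survives; it is Γ'-adjacent to (y,z)
            have hIxz : Inc r (x,z) := ⟨hrxz, hrzx⟩
            have hxzE : Inc (Ext r (s,t)) (x,z) := inc_ext.mpr ⟨hIxz, hcxz, hczx⟩
            have hstep : GStep (Ext r (s,t)) (y,z) (x,z) :=
              ⟨hyzE, hxzE, Or.inr ⟨rfl, Or.inr (Or.inr hxy)⟩⟩
            exact Or.inr (hS4' _ _ hyz (Relation.ReflTransGen.single hstep))
        · -- S' (x,y), Cls (y,z)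
          have hxyE : Inc (Ext r (s,t)) (x,y) := hS1' _ hxy
          have hxyEp := inc_ext.mp hxyE
          by_cases hxz : x = z
          · exfalso
            exact hxyE.2 (Or.inr (hxz.symm ▸ hyz))
          by_cases hrxz : r x z
          · exfalso
            have hIzy : Inc r (z,y) := (cls_inc hp₀ hyz).swap
            have : GStep r (x,y) (z,y) := ⟨hxyEp.1, hIzy, Or.inr ⟨rfl, Or.inl hrxz⟩⟩
            have h2 : Conn r (z,y) (t,s) := by simpa using conn_swap hyz
            have : Conn r (x,y) (t,s) := (Relation.ReflTransGen.single this).trans h2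
            have : Conn r (y,x) (s,t) := by simpa using conn_swap this
            exact hxyEp.2.2 this
          by_cases hrzx : r z x
          · exfalso
            have : Ext r (s,t) y x := htrans' (Or.inr hyz) (Or.inl hrzx)
            exact hxyE.2 this
          by_cases hczx : Cls r (s,t) (z,x)
          · exfalso
            have hconn : Conn r (y,z) (z,x) := hyz.trans (conn_symm hczx)
            obtain ⟨hI, hC⟩ := T1 hrefl hstar (cls_inc hp₀ hyz) (cls_inc hp₀ hczx) hconn
            have : Cls r (s,t) (y,x) := (conn_symm hC).trans hyz
            exact hxyE.2 (Or.inr this)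
          by_cases hcxz : Cls r (s,t) (x,z)
          · exact Or.inl hcxz
          · have hIxz : Inc r (x,z) := ⟨hrxz, hrzx⟩
            have hxzE : Inc (Ext r (s,t)) (x,z) := inc_ext.mpr ⟨hIxz, hcxz, hczx⟩
            have hstep : GStep (Ext r (s,t)) (x,y) (x,z) :=
              ⟨hxyE, hxzE, Or.inl ⟨rfl, Or.inl (Or.inr hyz)⟩⟩
            exact Or.inr (hS4' _ _ hxy (Relation.ReflTransGen.single hstep))
        · exact Or.inr (hS3' x y z hxy hyz)
      · -- class closure
        rintro p q (hp | hp) hconn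
        · exact Or.inl ((conn_symm hconn).trans hp)
        · right
          induction hconn with
          | refl => exact hp
          | @tail m e' hwalk hstep ihw =>
            have hS'm : S' m := ihw
            have hmE : Inc (Ext r (s,t)) m := hS1' _ hS'm
            have hmEp := inc_ext.mp hmE
            have he'Ep : Ep r (s,t) e' := by
              refine ⟨hstep.2.1, ?_, ?_⟩
              · intro hc
                exact hmEp.2.1 ((Relation.ReflTransGen.single hstep).trans hc)
              · intro hc
                exact hmEp.2.2
                  ((Relation.ReflTransGen.single (gstep_swap hstep)).trans hc)
            have hstep' : GStep (Ext r (s,t)) m e' := by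
              obtain ⟨h1, h2, hc | hc⟩ := hstep
              · exact ⟨hmE, inc_ext.mpr he'Ep, Or.inl ⟨hc.1, hc.2.imp Or.inl Or.inl⟩⟩
              · exact ⟨hmE, inc_ext.mpr he'Ep, Or.inr ⟨hc.1, hc.2.imp Or.inl Or.inl⟩⟩
            exact hS4' _ _ hS'm (Relation.ReflTransGen.single hstep')
    · -- no incomparable pairs at all
      push_neg at hex
      exact ⟨fun _ => False, fun p hp => hp.elim, fun p hp => absurd hp (hex p),
        fun x y z h _ => h.elim, fun p q h _ => h.elim⟩

/-- From `Star` we get two linear extensions realizing the order. -/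
lemma dim2_of_star [Fintype X] {r : X → X → Prop} (hrefl : ∀ x, r x x) (htrans : Transitive r)
    (hanti : ∀ {x y : X}, r x y → r y x → x = y) (hstar : Star r) :
    ∃ L1 L2 : X → X → Prop,
      IsLinearOrder X L1 ∧ IsLinearOrder X L2 ∧
      (∀ x y : X, r x y → L1 x y) ∧ (∀ x y : X, r x y → L2 x y) ∧
      ∀ x y : X, r x y ↔ (L1 x y ∧ L2 x y) := by
  classical
  obtain ⟨S, hS1, hS2, hS3, _⟩ :=
    conjugate (Set.ncard {p : X × X | Inc r p}) r hrefl htrans hanti hstar rfl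
  set Lo1 : X → X → Prop := fun x y => r x y ∨ S (x,y) with hLo1
  set Lo2 : X → X → Prop := fun x y => r x y ∨ S (y,x) with hLo2
  have transversal : ∀ {x y : X}, Inc r (x,y) → ¬ S (x,y) → S (y,x) := by
    intro x y h hn
    by_contra hn2
    have := (hS2 (x,y) h).mpr (by simpa using hn2)
    exact hn this
  have nboth : ∀ {x y : X}, S (x,y) → S (y,x) → False := by
    intro x y h h'
    have := (hS2 (x,y) (hS1 _ h)).mp h
    simp only [Prod.swap_prod_mk] at this
    exact this h'
  have trans1 : ∀ x y z : X, Lo1 x y → Lo1 y z → Lo1 x z := by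
    rintro x y z (h | h) (h' | h')
    · exact Or.inl (htrans h h')
    · by_cases hxy : x = y
      · exact Or.inr (hxy ▸ h')
      by_cases hxz : x = z
      · exact Or.inl (hxz ▸ hrefl x)
      by_cases hrxz : r x z
      · exact Or.inl hrxz
      by_cases hrzx : r z x
      · exact absurd (htrans hrzx h) (hS1 _ h').2
      by_cases hs : S (x,z)
      · exact Or.inr hs
      · have hzx := transversal ⟨hrxz, hrzx⟩ hs
        exact absurd h (hS1 _ (hS3 y z x h' hzx)).2
    · by_cases hyz : y = z
      · exact Or.inr (hyz ▸ h)
      by_cases hxz : x = z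
      · exact Or.inl (hxz ▸ hrefl x)
      by_cases hrxz : r x z
      · exact Or.inl hrxz
      by_cases hrzx : r z x
      · exact absurd (htrans h' hrzx) (hS1 _ h).2
      by_cases hs : S (x,z)
      · exact Or.inr hs
      · have hzx := transversal ⟨hrxz, hrzx⟩ hs
        exact absurd h' (hS1 _ (hS3 z x y hzx h)).2
    · exact Or.inr (hS3 x y z h h')
  have anti1 : ∀ x y : X, Lo1 x y → Lo1 y x → x = y := by
    rintro x y (h | h) (h' | h')
    · exact hanti h h'
    · exact absurd h (hS1 _ h').2
    · exact absurd h' (hS1 _ h).2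
    · exact (nboth h h').elim
  have trans2 : ∀ x y z : X, Lo2 x y → Lo2 y z → Lo2 x z := by
    rintro x y z (h | h) (h' | h')
    · exact Or.inl (htrans h h')
    · by_cases hxy : x = y
      · exact Or.inr (hxy ▸ h')
      by_cases hxz : x = z
      · exact Or.inl (hxz ▸ hrefl x)
      by_cases hrxz : r x z
      · exact Or.inl hrxz
      by_cases hrzx : r z x
      · exact absurd (htrans hrzx h) (hS1 _ h').1
      by_cases hs : S (z,x)
      · exact Or.inr hs
      · have hxzS := transversal ⟨hrzx, hrxz⟩ hs
        exact absurd h (hS1 _ (hS3 x z y hxzS h')).1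
    · by_cases hyz : y = z
      · exact Or.inr (hyz ▸ h)
      by_cases hxz : x = z
      · exact Or.inl (hxz ▸ hrefl x)
      by_cases hrxz : r x z
      · exact Or.inl hrxz
      by_cases hrzx : r z x
      · exact absurd (htrans h' hrzx) (hS1 _ h).1
      by_cases hs : S (z,x)
      · exact Or.inr hs
      · have hxzS := transversal ⟨hrzx, hrxz⟩ hs
        exact absurd h' (hS1 _ (hS3 y x z h hxzS)).1
    · exact Or.inr (hS3 z y x h' h)
  have anti2 : ∀ x y : X, Lo2 x y → Lo2 y x → x = y := by
    rintro x y (h | h) (h' | h')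
    · exact hanti h h'
    · exact absurd h (hS1 _ h').1
    · exact absurd h' (hS1 _ h).1
    · exact (nboth h' h).elim
  haveI i1 : IsPartialOrder X Lo1 :=
    { refl := fun x => Or.inl (hrefl x)
      trans := trans1
      antisymm := anti1 }
  haveI i2 : IsPartialOrder X Lo2 :=
    { refl := fun x => Or.inl (hrefl x)
      trans := trans2
      antisymm := anti2 }
  obtain ⟨L1, hL1, hsub1⟩ := extend_partialOrder Lo1
  obtain ⟨L2, hL2, hsub2⟩ := extend_partialOrder Lo2
  refine ⟨L1, L2, hL1, hL2, fun x y h => hsub1 _ _ (Or.inl h), fun x y h => hsub2 _ _ (Or.inl h), ?_⟩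
  intro x y
  constructor
  · intro h
    exact ⟨hsub1 _ _ (Or.inl h), hsub2 _ _ (Or.inl h)⟩
  · rintro ⟨h1, h2⟩
    by_contra hn
    by_cases hyx : r y x
    · have h1' : L1 y x := hsub1 _ _ (Or.inl hyx)
      have : x = y := hL1.toIsPartialOrder.toAntisymm.antisymm _ _ h1 h1'
      exact hn (this ▸ hrefl x)
    · by_cases hs : S (x,y)
      · have h2' : L2 y x := hsub2 _ _ (Or.inr hs)
        have : x = y := hL2.toIsPartialOrder.toAntisymm.antisymm _ _ h2 h2'
        exact hn (this ▸ hrefl x)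
      · have hyxS := transversal ⟨hn, hyx⟩ hs
        have h1' : L1 y x := hsub1 _ _ (Or.inr hyxS)
        have : x = y := hL1.toIsPartialOrder.toAntisymm.antisymm _ _ h1 h1'
        exact hn (this ▸ hrefl x)

section Walks

variable {Y : Type*} [PartialOrder Y]

/-- walks in the transitive incompatibility graph -/
inductive TW : Y × Y → Y × Y → ℕ → Prop where
  | refl (p : Y × Y) (hp : Inc (fun x y : Y => x ≤ y) p) : TW p p 0
  | cons {p q e : Y × Y} {n : ℕ} (hp : Inc (fun x y : Y => x ≤ y) p) (hpq : Incomp p q)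
      (h : TW q e n) : TW p e (n + 1)

lemma TW.append {p q e : Y × Y} {a b : ℕ} (h1 : TW p q a) (h2 : TW q e b) :
    TW p e (a + b) := by
  induction h1 with
  | refl => simpa using h2
  | cons hp hpq h ih =>
    rw [Nat.succ_add]
    exact TW.cons hp hpq (ih h2)

lemma incomp_self_swap {p : Y × Y} : Incomp p p.swap := ⟨le_refl _, le_refl _⟩

lemma incomp_swap_self {p : Y × Y} : Incomp p.swap p := ⟨le_refl _, le_refl _⟩

lemma tw_swap {p : Y × Y} (hp : Inc (fun x y : Y => x ≤ y) p) : TW p p.swap 1 :=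
  TW.cons hp incomp_self_swap (TW.refl p.swap hp.swap)

lemma gstep_tig {p q : Y × Y} (h : GStep (fun x y : Y => x ≤ y) p q) :
    Incomp p q.swap ∨ Incomp p.swap q := by
  obtain ⟨p1, p2⟩ := p
  obtain ⟨q1, q2⟩ := q
  obtain ⟨hp, hq, ⟨h1, h2 | h2⟩ | ⟨h1, h2 | h2⟩⟩ := h <;> simp only at h1 h2 <;> subst h1
  · exact Or.inl ⟨le_refl _, h2⟩
  · exact Or.inr ⟨h2, le_refl _⟩
  · exact Or.inr ⟨le_refl _, h2⟩
  · exact Or.inl ⟨h2, le_refl _⟩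

lemma gstep_tw2 {p q : Y × Y} (h : GStep (fun x y : Y => x ≤ y) p q) :
    TW p.swap q.swap 2 := by
  have hp := h.1
  have hq := h.2.1
  rcases gstep_tig h with hc | hc
  · exact TW.cons hp.swap incomp_swap_self (TW.cons hp hc (TW.refl q.swap hq.swap))
  · exact TW.cons hp.swap hc (TW.cons hq incomp_self_swap (TW.refl q.swap hq.swap))

lemma conn_odd_tw {p q : Y × Y} (h : Conn (fun x y : Y => x ≤ y) p q)
    (hp : Inc (fun x y : Y => x ≤ y) p) : ∃ n, Odd n ∧ TW p q.swap n := by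
  induction h with
  | refl => exact ⟨1, odd_one, tw_swap hp⟩
  | tail hwalk hstep ih =>
    obtain ⟨n, hodd, htw⟩ := ih
    exact ⟨n + 2, by
      obtain ⟨k, hk⟩ := hodd
      exact ⟨k + 1, by omega⟩, htw.append (gstep_tw2 hstep)⟩

lemma tw_to_fun {p e : Y × Y} {n : ℕ} (h : TW p e n) :
    ∃ w : ℕ → Y × Y, w 0 = p ∧ w n = e ∧ (∀ i, i < n → Incomp (w i) (w (i + 1))) ∧
      (∀ i, i ≤ n → Inc (fun x y : Y => x ≤ y) (w i)) := by
  induction h with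
  | refl p hp =>
    exact ⟨fun _ => p, rfl, rfl, fun i hi => absurd hi (by omega), fun _ _ => hp⟩
  | @cons p q e n hp hpq h ih =>
    obtain ⟨w, hw0, hwn, hadj, hinc⟩ := ih
    refine ⟨fun i => Nat.casesOn i p w, rfl, hwn, ?_, ?_⟩
    · intro i hi
      cases i with
      | zero => simpa [hw0] using hpq
      | succ j => exact hadj j (by omega)
    · intro i hi
      cases i with
      | zero => exact hp
      | succ j => exact hinc j (by omega)

end Walks

section Cycle

variable {Y : Type*} [PartialOrder Y]

lemma not_star_cycle (h : ¬ Star (fun x y : Y => x ≤ y)) :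
    ∃ n : ℕ, Odd n ∧ ∃ w : ZMod n → Y × Y, Function.Injective w ∧
      (∀ i, w i ∈ IncPairs Y) ∧ ∀ i, Incomp (w i) (w (i + 1)) := by
  classical
  rw [Star] at h
  push_neg at h
  obtain ⟨q, hq, hconn⟩ := h
  obtain ⟨m, hodd, htw⟩ := conn_odd_tw hconn hq
  rw [Prod.swap_swap] at htw
  obtain ⟨w, hw0, hwm, hadj, hinc⟩ := tw_to_fun htw
  set P : ℕ → Prop := fun n => Odd n ∧ ∃ v : ℕ → Y × Y, v n = v 0 ∧
    (∀ i, i < n → Incomp (v i) (v (i + 1))) ∧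
    (∀ i, i ≤ n → Inc (fun x y : Y => x ≤ y) (v i)) with hP
  have hPm : P m := ⟨hodd, w, by rw [hwm, hw0], hadj, hinc⟩
  have hex : ∃ n, P n := ⟨m, hPm⟩
  obtain ⟨hodd₀, v, hclosed, vadj, vinc⟩ := Nat.find_spec hex
  set n₀ := Nat.find hex with hn₀
  have hmin : ∀ k, k < n₀ → ¬ P k := fun k hk => Nat.find_min hex hk
  have hpos : 0 < n₀ := hodd₀.pos
  have hne1 : n₀ ≠ 1 := by
    intro h1
    have h01 : v 1 = v 0 := by rw [← h1]; exact hclosed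
    have := vadj 0 (by omega)
    rw [h01] at this
    exact (vinc 0 (by omega)).2 this.1
  obtain ⟨k0, hk0⟩ := id hodd₀
  have h3 : 2 ≤ n₀ := by omega
  -- injectivity on [0, n₀)
  have hinj : ∀ i j, i < j → j < n₀ → v i ≠ v j := by
    intro i j hij hj heq
    set d := j - i with hd
    have hd1 : 1 ≤ d := by omega
    have hdn : d < n₀ := by omega
    have hd2n : n₀ - d < n₀ := by omega
    have hd2pos : 1 ≤ n₀ - d := by omega
    rcases Nat.even_or_odd d with hdev | hdodd
    · -- n₀ - d is odd : use the outer walk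
      have hodd2 : Odd (n₀ - d) := by
        rcases hdev with ⟨l, hl⟩
        exact ⟨k0 - l, by omega⟩
      apply hmin (n₀ - d) hd2n
      refine ⟨hodd2, fun k => if j + k ≤ n₀ then v (j + k) else v (j + k - n₀), ?_, ?_, ?_⟩
      · -- closed
        show (if j + (n₀ - d) ≤ n₀ then v (j + (n₀ - d)) else v (j + (n₀ - d) - n₀)) =
          (if j + 0 ≤ n₀ then v (j + 0) else v (j + 0 - n₀))
        rw [if_pos (show j + 0 ≤ n₀ by omega)]
        by_cases hi0 : j + (n₀ - d) ≤ n₀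
        · rw [if_pos hi0, show j + (n₀ - d) = n₀ by omega, hclosed,
            show j + 0 = j by omega, ← heq, show i = 0 by omega]
        · rw [if_neg hi0, show j + (n₀ - d) - n₀ = i by omega,
            show j + 0 = j by omega, ← heq]
      · -- adjacency
        intro k hk
        show Incomp (if j + k ≤ n₀ then v (j + k) else v (j + k - n₀))
          (if j + (k+1) ≤ n₀ then v (j + (k+1)) else v (j + (k+1) - n₀))
        rw [show j + (k+1) = j + k + 1 by omega]
        by_cases h1 : j + k + 1 ≤ n₀
        · rw [if_pos (show j + k ≤ n₀ by omega), if_pos h1]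
          exact vadj (j + k) (by omega)
        · by_cases h2 : j + k ≤ n₀
          · have hjk : j + k = n₀ := by omega
            rw [if_pos h2, if_neg h1, show j + k + 1 - n₀ = 1 by omega, hjk, hclosed]
            exact vadj 0 (by omega)
          · rw [if_neg h2, if_neg h1, show j + k + 1 - n₀ = (j + k - n₀) + 1 by omega]
            exact vadj (j + k - n₀) (by omega)
      · intro k hk
        show Inc (fun x y : Y => x ≤ y) (if j + k ≤ n₀ then v (j + k) else v (j + k - n₀))
        by_cases h1 : j + k ≤ n₀
        · rw [if_pos h1]
          exact vinc (j + k) (by omega)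
        · rw [if_neg h1]
          exact vinc (j + k - n₀) (by omega)
    · -- d odd : use the inner walk
      apply hmin d hdn
      refine ⟨hdodd, fun k => v (i + k), ?_, ?_, ?_⟩
      · show v (i + d) = v (i + 0)
        rw [show i + d = j by omega, show i + 0 = i by omega, ← heq]
      · intro k hk
        show Incomp (v (i + k)) (v (i + (k + 1)))
        rw [show i + (k + 1) = (i + k) + 1 by omega]
        exact vadj (i + k) (by omega)
      · intro k hk
        exact vinc (i + k) (by omega)
  -- build the ZMod cycle
  haveI : NeZero n₀ := ⟨by omega⟩
  haveI : Fact (1 < n₀) := ⟨by omega⟩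
  refine ⟨n₀, hodd₀, fun i => v i.val, ?_, ?_, ?_⟩
  · intro i j hij
    by_contra hne
    rcases Nat.lt_trichotomy i.val j.val with h | h | h
    · exact hinj _ _ h (ZMod.val_lt j) hij
    · exact hne (ZMod.val_injective n₀ h)
    · exact hinj _ _ h (ZMod.val_lt i) hij.symm
  · intro i
    exact vinc i.val (ZMod.val_lt i).le
  · intro i
    show Incomp (v i.val) (v (i + 1 : ZMod n₀).val)
    by_cases hlast : i.val + 1 = n₀
    · have hv1 : (i + 1 : ZMod n₀).val = 0 := by
        rw [ZMod.val_add, ZMod.val_one, hlast, Nat.mod_self]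
      rw [hv1]
      have := vadj i.val (ZMod.val_lt i)
      rw [hlast, hclosed] at this
      exact this
    · have hv1 : (i + 1 : ZMod n₀).val = i.val + 1 := by
        rw [ZMod.val_add, ZMod.val_one]
        exact Nat.mod_eq_of_lt (by have := ZMod.val_lt i; omega)
      rw [hv1]
      exact vadj i.val (ZMod.val_lt i)

end Cycle

end Stmt18


/-- if a finite poset does not have order dimension at most 2 (it is
not the intersection of two linear extensions, i.e., dimension ≥ 3), then tig(X,≤)
contains an odd cycle. -/
theorem stmt_18 {X : Type*} [Fintype X] [PartialOrder X]
    (hdim : ¬ ∃ L1 L2 : X → X → Prop,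
        IsLinearOrder X L1 ∧ IsLinearOrder X L2 ∧
        (∀ x y : X, x ≤ y → L1 x y) ∧ (∀ x y : X, x ≤ y → L2 x y) ∧
        ∀ x y : X, x ≤ y ↔ (L1 x y ∧ L2 x y)) :
    ∃ n : ℕ, Odd n ∧ ∃ w : ZMod n → X × X, Function.Injective w ∧
      (∀ i, w i ∈ IncPairs X) ∧ ∀ i, Incomp (w i) (w (i + 1)) := by
  classical
  by_cases hstar : Stmt18.Star (fun x y : X => x ≤ y)
  · exact absurd
      (Stmt18.dim2_of_star (fun x => le_refl x)
        (fun {a b c} hab hbc => le_trans hab hbc)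
        (fun {x y} h h' => le_antisymm h h') hstar) hdim
  · exact Stmt18.not_star_cycle hstar
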